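/- Let W = (W_{kl}) be an r×r unitary matrix, let θ ∈ ℝ, let D = diag(e^{iθ}, e^{−iθ}), and define Ṽ_k = D*·(∑_{l=1}^r W_{kl} V_l)·D for k = 1, …, r. Then each Ṽ_k is traceless, ∑_k [Ṽ_k, Ṽ_k*] is diagonal, and the quantities Σ, Δ, δ, |z₁|, |z₂|, and z₁·conj(z₂)² computed from the family (Ṽ_k) coincide with those computed from (V_k). (In particular, Σ, Δ, δ, r₁ = |z₁|, r₂ = 4|z₂| and the phase φ₁ − 2φ₂ mod 2π depend only on the Lindblad generator.) -/

import Mathlib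

open Matrix Complex

lemma keyc {r : ℕ} {W : Matrix (Fin r) (Fin r) ℂ} (hW : Wᴴ * W = 1) (l l' : Fin r) :
    ∑ k, (starRingEnd ℂ) (W k l) * W k l' = if l = l' then 1 else 0 := by
  have := congrFun (congrFun hW l) l'
  simpa [Matrix.mul_apply, Matrix.conjTranspose_apply, Matrix.one_apply] using this

lemma keyc' {r : ℕ} {W : Matrix (Fin r) (Fin r) ℂ} (hW : Wᴴ * W = 1) (l l' : Fin r) :
    ∑ k, W k l * (starRingEnd ℂ) (W k l') = if l = l' then 1 else 0 := by
  refine Eq.trans (Finset.sum_congr rfl fun k _ => mul_comm _ _) ?_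
  rw [keyc hW l' l]
  split <;> split <;> simp_all

lemma key1 {r : ℕ} {W : Matrix (Fin r) (Fin r) ℂ} (hW : Wᴴ * W = 1) (f g : Fin r → ℂ) :
    ∑ k, (starRingEnd ℂ) (∑ l, W k l * f l) * (∑ l, W k l * g l)
      = ∑ l, (starRingEnd ℂ) (f l) * g l := by
  have h1 : ∀ k, (starRingEnd ℂ) (∑ l, W k l * f l) * (∑ l, W k l * g l)
      = ∑ l, ∑ l', ((starRingEnd ℂ) (W k l) * W k l') * ((starRingEnd ℂ) (f l) * g l') := by
    intro k
    rw [map_sum, Finset.sum_mul_sum]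
    refine Finset.sum_congr rfl fun l _ => Finset.sum_congr rfl fun l' _ => ?_
    rw [RingHom.map_mul]; ring
  simp_rw [h1]
  rw [Finset.sum_comm]
  refine Finset.sum_congr rfl fun l _ => ?_
  rw [Finset.sum_comm]
  calc ∑ l', ∑ k, ((starRingEnd ℂ) (W k l) * W k l') * ((starRingEnd ℂ) (f l) * g l')
      = ∑ l', (if l = l' then 1 else 0) * ((starRingEnd ℂ) (f l) * g l') := by
        refine Finset.sum_congr rfl fun l' _ => ?_
        rw [← Finset.sum_mul, keyc hW l l']
    _ = (starRingEnd ℂ) (f l) * g l := by simp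

lemma key2 {r : ℕ} {W : Matrix (Fin r) (Fin r) ℂ} (hW : Wᴴ * W = 1)
    (M N : Fin r → Matrix (Fin 2) (Fin 2) ℂ) :
    ∑ k, (∑ l, W k l • M l) * (∑ l, (starRingEnd ℂ) (W k l) • N l) = ∑ l, M l * N l := by
  have h1 : ∀ k, (∑ l, W k l • M l) * (∑ l, (starRingEnd ℂ) (W k l) • N l)
      = ∑ l, ∑ l', (W k l * (starRingEnd ℂ) (W k l')) • (M l * N l') := by
    intro k
    rw [Finset.sum_mul_sum]
    refine Finset.sum_congr rfl fun l _ => Finset.sum_congr rfl fun l' _ => ?_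
    rw [smul_mul_smul_comm]
  simp_rw [h1]
  rw [Finset.sum_comm]
  refine Finset.sum_congr rfl fun l _ => ?_
  rw [Finset.sum_comm]
  calc ∑ l', ∑ k, (W k l * (starRingEnd ℂ) (W k l')) • (M l * N l')
      = ∑ l', (if l = l' then (1:ℂ) else 0) • (M l * N l') := by
        refine Finset.sum_congr rfl fun l' _ => ?_
        rw [← Finset.sum_smul, keyc' hW l l']
    _ = M l * N l := by simp

lemma key2' {r : ℕ} {W : Matrix (Fin r) (Fin r) ℂ} (hW : Wᴴ * W = 1)
    (M N : Fin r → Matrix (Fin 2) (Fin 2) ℂ) :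
    ∑ k, (∑ l, (starRingEnd ℂ) (W k l) • M l) * (∑ l, W k l • N l) = ∑ l, M l * N l := by
  have h1 : ∀ k, (∑ l, (starRingEnd ℂ) (W k l) • M l) * (∑ l, W k l • N l)
      = ∑ l, ∑ l', ((starRingEnd ℂ) (W k l) * W k l') • (M l * N l') := by
    intro k
    rw [Finset.sum_mul_sum]
    refine Finset.sum_congr rfl fun l _ => Finset.sum_congr rfl fun l' _ => ?_
    rw [smul_mul_smul_comm]
  simp_rw [h1]
  rw [Finset.sum_comm]
  refine Finset.sum_congr rfl fun l _ => ?_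
  rw [Finset.sum_comm]
  calc ∑ l', ∑ k, ((starRingEnd ℂ) (W k l) * W k l') • (M l * N l')
      = ∑ l', (if l = l' then (1:ℂ) else 0) • (M l * N l') := by
        refine Finset.sum_congr rfl fun l' _ => ?_
        rw [← Finset.sum_smul, keyc hW l l']
    _ = M l * N l := by simp

lemma sum_abs_sq_eq_re {r : ℕ} (f : Fin r → ℂ) :
    ∑ k, (‖f k‖) ^ 2 = (∑ k, (starRingEnd ℂ) (f k) * f k).re := by
  rw [Complex.re_sum]
  refine Finset.sum_congr rfl fun k _ => ?_
  rw [mul_comm, Complex.mul_conj, Complex.ofReal_re, Complex.sq_norm]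

lemma sumsq {r : ℕ} {W : Matrix (Fin r) (Fin r) ℂ} (hW : Wᴴ * W = 1) (f : Fin r → ℂ) :
    ∑ k, (‖∑ l, W k l * f l‖) ^ 2 = ∑ l, (‖f l‖) ^ 2 := by
  rw [sum_abs_sq_eq_re, sum_abs_sq_eq_re, key1 hW f f]
/-- `Σ = ∑ₖ (|vₖ|² + |wₖ|²)`. -/
noncomputable def SigOf {r : ℕ} (V : Fin r → Matrix (Fin 2) (Fin 2) ℂ) : ℝ :=
  ∑ k, (‖V k 0 1‖ ^ 2 + ‖V k 1 0‖ ^ 2)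

/-- `Δ = ∑ₖ (|vₖ|² − |wₖ|²)`. -/
noncomputable def DeltaOf {r : ℕ} (V : Fin r → Matrix (Fin 2) (Fin 2) ℂ) : ℝ :=
  ∑ k, (‖V k 0 1‖ ^ 2 - ‖V k 1 0‖ ^ 2)

/-- `δ = ∑ₖ (2|uₖ|² − (|vₖ|² + |wₖ|²)/2)`. -/
noncomputable def deltaOf {r : ℕ} (V : Fin r → Matrix (Fin 2) (Fin 2) ℂ) : ℝ :=
  ∑ k, (2 * ‖V k 0 0‖ ^ 2 -
    (‖V k 0 1‖ ^ 2 + ‖V k 1 0‖ ^ 2) / 2)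

/-- `z₁ = i ∑ₖ conj(vₖ)·wₖ`. -/
noncomputable def z1Of {r : ℕ} (V : Fin r → Matrix (Fin 2) (Fin 2) ℂ) : ℂ :=
  Complex.I * ∑ k, (starRingEnd ℂ) (V k 0 1) * V k 1 0

/-- `z₂ = ∑ₖ conj(uₖ)·wₖ`. -/
noncomputable def z2Of {r : ℕ} (V : Fin r → Matrix (Fin 2) (Fin 2) ℂ) : ℂ :=
  ∑ k, (starRingEnd ℂ) (V k 0 0) * V k 1 0

theorem stmt_9 {r : ℕ} (V : Fin r → Matrix (Fin 2) (Fin 2) ℂ)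
    (htr : ∀ k, (V k).trace = 0)
    (hdiag : (∑ k, (V k * (V k)ᴴ - (V k)ᴴ * V k)).IsDiag)
    (W : Matrix (Fin r) (Fin r) ℂ) (hW : W ∈ Matrix.unitaryGroup (Fin r) ℂ)
    (θ : ℝ)
    (D : Matrix (Fin 2) (Fin 2) ℂ)
    (hD : D = Matrix.diagonal ![Complex.exp (Complex.I * θ), Complex.exp (-(Complex.I * θ))])
    (Vt : Fin r → Matrix (Fin 2) (Fin 2) ℂ)
    (hVt : ∀ k, Vt k = Dᴴ * (∑ l, W k l • V l) * D) :
    (∀ k, (Vt k).trace = 0) ∧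
    (∑ k, (Vt k * (Vt k)ᴴ - (Vt k)ᴴ * Vt k)).IsDiag ∧
    SigOf Vt = SigOf V ∧
    DeltaOf Vt = DeltaOf V ∧
    deltaOf Vt = deltaOf V ∧
    ‖z1Of Vt‖ = ‖z1Of V‖ ∧
    ‖z2Of Vt‖ = ‖z2Of V‖ ∧
    z1Of Vt * ((starRingEnd ℂ) (z2Of Vt)) ^ 2 = z1Of V * ((starRingEnd ℂ) (z2Of V)) ^ 2 := by
  set c : ℂ := Complex.exp (Complex.I * θ) with hcdef
  have hcconj : (starRingEnd ℂ) c = Complex.exp (-(Complex.I * θ)) := by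
    rw [hcdef, ← Complex.exp_conj]; congr 1; simp
  have hc1 : (starRingEnd ℂ) c * c = 1 := by
    rw [hcconj, hcdef, ← Complex.exp_add]; simp
  have hc1' : c * (starRingEnd ℂ) c = 1 := by rw [mul_comm]; exact hc1
  have hcabs : ‖c‖ = 1 := by rw [hcdef, Complex.norm_exp]; simp
  have hW1 : Wᴴ * W = 1 := by
    have := hW.1; rwa [Matrix.star_eq_conjTranspose] at this
  have hD' : D = Matrix.diagonal ![c, (starRingEnd ℂ) c] := by rw [hD, hcconj]
  -- entry formulas
  have hent : ∀ k (i j : Fin 2), Vt k i j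
      = (starRingEnd ℂ) (![c, (starRingEnd ℂ) c] i) * (∑ l, W k l * V l i j)
        * (![c, (starRingEnd ℂ) c] j) := by
    intro k i j
    rw [hVt k, hD']
    simp only [Matrix.diagonal_conjTranspose, Matrix.mul_diagonal, Matrix.diagonal_mul]
    congr 1
    exact congrArg₂ (· * ·) rfl (by simp [Matrix.sum_apply])
  have e00 : ∀ k, Vt k 0 0 = ∑ l, W k l * V l 0 0 := by
    intro k
    have := hent k 0 0
    simp only [Matrix.cons_val_zero] at this
    rw [this]
    linear_combination (∑ l, W k l * V l 0 0) * hc1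
  have e11 : ∀ k, Vt k 1 1 = ∑ l, W k l * V l 1 1 := by
    intro k
    have := hent k 1 1
    simp only [Matrix.cons_val_one, Matrix.head_cons, Matrix.cons_val_zero, Complex.conj_conj] at this
    rw [this]
    linear_combination (∑ l, W k l * V l 1 1) * hc1'
  have e01 : ∀ k, Vt k 0 1 = (starRingEnd ℂ) c * (starRingEnd ℂ) c * ∑ l, W k l * V l 0 1 := by
    intro k
    have := hent k 0 1
    simp only [Matrix.cons_val_zero, Matrix.cons_val_one, Matrix.head_cons] at this
    rw [this]; ring
  have e10 : ∀ k, Vt k 1 0 = c * c * ∑ l, W k l * V l 1 0 := by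
    intro k
    have := hent k 1 0
    simp only [Matrix.cons_val_zero, Matrix.cons_val_one, Matrix.head_cons,
      Complex.conj_conj] at this
    rw [this]; ring
  -- traces
  have htr' : ∀ k, (Vt k).trace = 0 := by
    intro k
    rw [Matrix.trace_fin_two, e00 k, e11 k, ← Finset.sum_add_distrib]
    have : ∀ l, V l 0 0 + V l 1 1 = 0 := by
      intro l; have := htr l; rwa [Matrix.trace_fin_two] at this
    refine Finset.sum_eq_zero fun l _ => ?_
    rw [← mul_add, this l, mul_zero]
  -- diagonal commutator sum
  have hDDH : D * Dᴴ = 1 := by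
    rw [hD', Matrix.diagonal_conjTranspose, Matrix.diagonal_mul_diagonal]
    ext i j
    fin_cases i <;> fin_cases j <;>
      simp [Matrix.diagonal, Matrix.one_apply, hc1', hc1]
  have hmm : ∀ A B : Matrix (Fin 2) (Fin 2) ℂ, (Dᴴ * A * D) * (Dᴴ * B * D) = Dᴴ * (A * B) * D := by
    intro A B
    calc (Dᴴ * A * D) * (Dᴴ * B * D) = Dᴴ * A * (D * Dᴴ) * (B * D) := by
          simp only [Matrix.mul_assoc]
      _ = Dᴴ * (A * B) * D := by rw [hDDH, Matrix.mul_one]; simp only [Matrix.mul_assoc]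
  have hVtH : ∀ k, (Vt k)ᴴ = Dᴴ * (∑ l, (starRingEnd ℂ) (W k l) • (V l)ᴴ) * D := by
    intro k
    rw [hVt k]
    rw [Matrix.conjTranspose_mul, Matrix.conjTranspose_mul, Matrix.conjTranspose_conjTranspose]
    rw [Matrix.conjTranspose_sum]
    simp only [Matrix.conjTranspose_smul, Matrix.mul_assoc]
    rfl
  have hcomm : ∑ k, (Vt k * (Vt k)ᴴ - (Vt k)ᴴ * Vt k)
      = Dᴴ * (∑ k, (V k * (V k)ᴴ - (V k)ᴴ * V k)) * D := by
    have step : ∀ k, Vt k * (Vt k)ᴴ - (Vt k)ᴴ * Vt k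
        = Dᴴ * ((∑ l, W k l • V l) * (∑ l, (starRingEnd ℂ) (W k l) • (V l)ᴴ)
            - (∑ l, (starRingEnd ℂ) (W k l) • (V l)ᴴ) * (∑ l, W k l • V l)) * D := by
      intro k
      rw [hVtH k, hVt k, hmm, hmm, Matrix.mul_sub, Matrix.sub_mul]
    simp_rw [step]
    rw [← Finset.sum_mul, ← Finset.mul_sum, Finset.sum_sub_distrib, key2 hW1, key2' hW1,
      ← Finset.sum_sub_distrib]
  have hisdiag : (∑ k, (Vt k * (Vt k)ᴴ - (Vt k)ᴴ * Vt k)).IsDiag := by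
    intro i j hij
    rw [hcomm, hD', Matrix.diagonal_conjTranspose]
    rw [Matrix.mul_diagonal, Matrix.diagonal_mul]
    rw [hdiag hij]
    simp
  -- abs entry formulas
  have habs00 : ∀ k, ‖Vt k 0 0‖ = ‖∑ l, W k l * V l 0 0‖ := by
    intro k; rw [e00 k]
  have habs01 : ∀ k, ‖Vt k 0 1‖ = ‖∑ l, W k l * V l 0 1‖ := by
    intro k; rw [e01 k]; simp [_root_.map_mul, Complex.norm_conj, hcabs]
  have habs10 : ∀ k, ‖Vt k 1 0‖ = ‖∑ l, W k l * V l 1 0‖ := by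
    intro k; rw [e10 k]; simp [_root_.map_mul, hcabs]
  have h00 : ∑ k, ‖Vt k 0 0‖ ^ 2 = ∑ k, ‖V k 0 0‖ ^ 2 := by
    simp_rw [habs00]; exact sumsq hW1 _
  have h01 : ∑ k, ‖Vt k 0 1‖ ^ 2 = ∑ k, ‖V k 0 1‖ ^ 2 := by
    simp_rw [habs01]; exact sumsq hW1 _
  have h10 : ∑ k, ‖Vt k 1 0‖ ^ 2 = ∑ k, ‖V k 1 0‖ ^ 2 := by
    simp_rw [habs10]; exact sumsq hW1 _
  -- z1, z2
  have hz1 : z1Of Vt = c ^ 4 * z1Of V := by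
    unfold z1Of
    have : ∀ k, (starRingEnd ℂ) (Vt k 0 1) * Vt k 1 0
        = c ^ 4 * ((starRingEnd ℂ) (∑ l, W k l * V l 0 1) * (∑ l, W k l * V l 1 0)) := by
      intro k
      rw [e01 k, e10 k]
      simp only [_root_.map_mul, Complex.conj_conj]
      ring
    simp_rw [this]
    rw [← Finset.mul_sum, key1 hW1]
    ring
  have hz2 : z2Of Vt = c ^ 2 * z2Of V := by
    unfold z2Of
    have : ∀ k, (starRingEnd ℂ) (Vt k 0 0) * Vt k 1 0
        = c ^ 2 * ((starRingEnd ℂ) (∑ l, W k l * V l 0 0) * (∑ l, W k l * V l 1 0)) := by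
      intro k
      rw [e00 k, e10 k]
      ring
    simp_rw [this]
    rw [← Finset.mul_sum, key1 hW1]
  refine ⟨htr', hisdiag, ?_, ?_, ?_, ?_, ?_, ?_⟩
  · unfold SigOf
    rw [Finset.sum_add_distrib, Finset.sum_add_distrib, h01, h10]
  · unfold DeltaOf
    rw [Finset.sum_sub_distrib, Finset.sum_sub_distrib, h01, h10]
  · unfold deltaOf
    rw [Finset.sum_sub_distrib, Finset.sum_sub_distrib, ← Finset.mul_sum, ← Finset.mul_sum,
      ← Finset.sum_div, ← Finset.sum_div, Finset.sum_add_distrib, Finset.sum_add_distrib,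
      h00, h01, h10]
  · rw [hz1]; simp [_root_.map_mul, map_pow, hcabs]
  · rw [hz2]; simp [_root_.map_mul, map_pow, hcabs]
  · rw [hz1, hz2, _root_.map_mul, map_pow]
    have h1 : c ^ 4 * ((starRingEnd ℂ) c) ^ 4 = 1 := by
      rw [← mul_pow, hc1', one_pow]
    calc c ^ 4 * z1Of V * (((starRingEnd ℂ) c) ^ 2 * (starRingEnd ℂ) (z2Of V)) ^ 2
        = (c ^ 4 * ((starRingEnd ℂ) c) ^ 4) * (z1Of V * ((starRingEnd ℂ) (z2Of V)) ^ 2) := by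
          ring
      _ = z1Of V * ((starRingEnd ℂ) (z2Of V)) ^ 2 := by rw [h1, one_mul]
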